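/- Let n ≥ 1 and let G_0 = 𝔽_2^n ⋊ S_n be the hyperoctahedral group, with S_n acting by permuting coordinates, and let π : G_0 → S_n be the natural projection. Up to conjugacy in G_0, the subgroups of G_0 that are maximal among proper subgroups of G_0 and satisfy π(H) = S_n are precisely: G_1 = {(v,σ) : v_1 + … + v_n = 0} (for every n ≥ 1), G_2 = {(v,σ) : v_1 + … + v_n = sgn(σ)} (for n ≥ 2), and G_3 = ⟨1⟩ × S_n = {(v,σ) : v = (0,…,0) or v = (1,…,1)} (for n ≥ 3 odd). Consequently, every proper subgroup of G_0 whose projection onto S_n is all of S_n is contained in a conjugate of G_1, G_2, or (for n ≥ 3 odd) G_3. -/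

import Mathlib

/-- The group `𝔽₂ⁿ` written multiplicatively. -/
abbrev Vn (n : ℕ) := Multiplicative (Fin n → ZMod 2)

/-- The action of `Sₙ` on `𝔽₂ⁿ` by permuting coordinates, as a homomorphism to `MulAut`. -/
def permAction (n : ℕ) : Equiv.Perm (Fin n) →* MulAut (Vn n) where
  toFun σ :=
    { toFun := fun v => Multiplicative.ofAdd fun i => Multiplicative.toAdd v (σ.symm i)
      invFun := fun v => Multiplicative.ofAdd fun i => Multiplicative.toAdd v (σ i)
      left_inv := fun v => by
        show Multiplicative.ofAdd (fun i => Multiplicative.toAdd v (σ.symm (σ i))) = v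
        simp
      right_inv := fun v => by
        show Multiplicative.ofAdd (fun i => Multiplicative.toAdd v (σ (σ.symm i))) = v
        simp
      map_mul' := fun v w => rfl }
  map_one' := rfl
  map_mul' := fun σ τ => rfl

/-- The hyperoctahedral group `G₀ = 𝔽₂ⁿ ⋊ Sₙ = S₂ ≀ Sₙ`. -/
abbrev G0 (n : ℕ) := SemidirectProduct (Vn n) (Equiv.Perm (Fin n)) (permAction n)

/-- The coordinate-sum character `(v, σ) ↦ v₁ + ⋯ + vₙ` of `G₀`. -/
def sumHom (n : ℕ) : G0 n →* Multiplicative (ZMod 2) where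
  toFun g := Multiplicative.ofAdd (∑ i, Multiplicative.toAdd g.left i)
  map_one' := by
    show Multiplicative.ofAdd (∑ i : Fin n, (0 : ZMod 2)) = 1
    simp
  map_mul' := fun a b => by
    show Multiplicative.ofAdd
        (∑ i, (Multiplicative.toAdd a.left i + Multiplicative.toAdd b.left (a.right.symm i)))
      = _
    rw [Finset.sum_add_distrib, Equiv.sum_comp a.right.symm fun i => Multiplicative.toAdd b.left i]
    exact ofAdd_add _ _

/-- The sign of a permutation as an element of `ZMod 2`: `0` for even, `1` for odd. -/
def sgn2 {n : ℕ} (σ : Equiv.Perm (Fin n)) : ZMod 2 :=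
  if Equiv.Perm.sign σ = 1 then 0 else 1

set_option linter.unnecessarySeqFocus false in
/-- The character `(v, σ) ↦ v₁ + ⋯ + vₙ + sgn σ` of `G₀`. -/
def sumSgnHom (n : ℕ) : G0 n →* Multiplicative (ZMod 2) where
  toFun g := Multiplicative.ofAdd ((∑ i, Multiplicative.toAdd g.left i) + sgn2 g.right)
  map_one' := by
    show Multiplicative.ofAdd ((∑ i : Fin n, (0:ZMod 2)) + sgn2 1) = 1
    simp [sgn2]
  map_mul' := fun a b => by
    have hsgn : sgn2 (a.right * b.right) = sgn2 a.right + sgn2 b.right := by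
      unfold sgn2
      rcases Int.units_eq_one_or (Equiv.Perm.sign a.right) with h1 | h1 <;>
        rcases Int.units_eq_one_or (Equiv.Perm.sign b.right) with h2 | h2 <;>
          simp [Equiv.Perm.sign_mul, h1, h2] <;> decide
    show Multiplicative.ofAdd
        ((∑ i, (Multiplicative.toAdd a.left i + Multiplicative.toAdd b.left (a.right.symm i)))
          + sgn2 (a * b).right) = _
    have hr : (a * b).right = a.right * b.right := rfl
    rw [hr, hsgn, Finset.sum_add_distrib,
      Equiv.sum_comp a.right.symm fun i => Multiplicative.toAdd b.left i]
    rw [show ∀ x y z w : ZMod 2, x + y + (z + w) = (x + z) + (y + w) by intros; ring]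
    exact ofAdd_add _ _

/-- `G₁ = {(v,σ) : v₁ + ⋯ + vₙ = 0}`. -/
def G1 (n : ℕ) : Subgroup (G0 n) := MonoidHom.ker (sumHom n)

/-- `G₂ = {(v,σ) : v₁ + ⋯ + vₙ = sgn σ}`. -/
def G2 (n : ℕ) : Subgroup (G0 n) := MonoidHom.ker (sumSgnHom n)

/-- `G₃ = ⟨𝟙⟩ × Sₙ = {(v,σ) : v = (0,…,0) or v = (1,…,1)}`. -/
def G3 (n : ℕ) : Subgroup (G0 n) where
  carrier := {g | Multiplicative.toAdd g.left = 0 ∨ Multiplicative.toAdd g.left = fun _ => 1}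
  one_mem' := Or.inl rfl
  mul_mem' := by
    rintro a b (ha | ha) (hb | hb)
    · left
      funext i
      show Multiplicative.toAdd a.left i + Multiplicative.toAdd b.left (a.right.symm i) = 0
      rw [congrFun ha, congrFun hb]; rfl
    · right
      funext i
      show Multiplicative.toAdd a.left i + Multiplicative.toAdd b.left (a.right.symm i) = 1
      rw [congrFun ha, congrFun hb]; rfl
    · right
      funext i
      show Multiplicative.toAdd a.left i + Multiplicative.toAdd b.left (a.right.symm i) = 1
      rw [congrFun ha, congrFun hb]; rfl
    · left
      funext i
      show Multiplicative.toAdd a.left i + Multiplicative.toAdd b.left (a.right.symm i) = 0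
      rw [congrFun ha, congrFun hb]; decide
  inv_mem' := by
    rintro a (ha | ha)
    · left
      funext i
      show -Multiplicative.toAdd a.left (a.right⁻¹.symm i) = 0
      rw [congrFun ha]; simp
    · right
      funext i
      show -Multiplicative.toAdd a.left (a.right⁻¹.symm i) = 1
      rw [congrFun ha]; decide


open Equiv Multiplicative

section PermHom

variable {α : Type*} [DecidableEq α] [Fintype α]

/-- sign as ZMod 2 for general α -/
def sg (σ : Equiv.Perm α) : ZMod 2 := if Equiv.Perm.sign σ = 1 then 0 else 1

lemma sg_one : sg (1 : Equiv.Perm α) = 0 := by simp [sg]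

set_option linter.unnecessarySeqFocus false in
lemma sg_mul (σ τ : Equiv.Perm α) : sg (σ * τ) = sg σ + sg τ := by
  unfold sg
  rcases Int.units_eq_one_or (Equiv.Perm.sign σ) with h1 | h1 <;>
    rcases Int.units_eq_one_or (Equiv.Perm.sign τ) with h2 | h2 <;>
      simp [h1, h2] <;> decide

lemma sg_inv (σ : Equiv.Perm α) : sg σ⁻¹ = sg σ := by
  unfold sg; simp

lemma sg_swap {x y : α} (h : x ≠ y) : sg (Equiv.swap x y) = 1 := by
  unfold sg
  rw [Equiv.Perm.sign_swap h]
  norm_num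

lemma hom_perm_eq (φ : Equiv.Perm α →* Multiplicative (ZMod 2)) {x y : α} (hxy : x ≠ y)
    (σ : Equiv.Perm α) : φ σ = ofAdd (toAdd (φ (Equiv.swap x y)) * sg σ) := by
  refine Equiv.Perm.swap_induction_on σ (by simp [sg_one]) fun f a b hab ih => ?_
  have hswap : φ (Equiv.swap a b) = φ (Equiv.swap x y) := by
    obtain ⟨c, hc⟩ := Equiv.Perm.isConj_swap hxy hab
    have h2 : φ (↑c * Equiv.swap x y) = φ (Equiv.swap a b * ↑c) := by rw [hc.eq]
    rw [map_mul, map_mul, mul_comm (φ ↑c)] at h2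
    exact (mul_right_cancel h2).symm
  rw [map_mul, hswap, ih, sg_mul, sg_swap hab,
    ← ofAdd_toAdd (φ (Equiv.swap x y)), ← ofAdd_add]
  congr 1
  simp only [toAdd_ofAdd]
  ring

end PermHom

section G0Helpers

open SemidirectProduct

variable {n : ℕ}

/-- additive left component -/
abbrev Av (g : G0 n) : Fin n → ZMod 2 := Multiplicative.toAdd g.left

/-- constructor -/
def mke (v : Fin n → ZMod 2) (σ : Equiv.Perm (Fin n)) : G0 n :=
  ⟨Multiplicative.ofAdd v, σ⟩

@[simp] lemma Av_mke (v : Fin n → ZMod 2) (σ) : Av (mke v σ) = v := rfl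
@[simp] lemma right_mke (v : Fin n → ZMod 2) (σ) : (mke v σ).right = σ := rfl

lemma mke_self (g : G0 n) : mke (Av g) g.right = g := rfl

lemma Av_mul (a b : G0 n) (i : Fin n) : Av (a * b) i = Av a i + Av b (a.right⁻¹ i) := rfl

lemma right_mul (a b : G0 n) : (a * b).right = a.right * b.right := rfl

lemma z2cases (x : ZMod 2) : x = 0 ∨ x = 1 := by revert x; decide
lemma z2aba : ∀ a b : ZMod 2, a + b + a = b := by decide
lemma z2nz : ∀ x : ZMod 2, x ≠ 0 → x = 1 := by decide
lemma z2ne : ∀ x y : ZMod 2, x ≠ y → x + y = 1 := by decide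
lemma z2neg : ∀ x : ZMod 2, -x = x := by decide
lemma z2addself : ∀ x : ZMod 2, x + x = 0 := by decide

lemma Av_inv (a : G0 n) (i : Fin n) : Av a⁻¹ i = Av a (a.right i) := by
  show -(Multiplicative.toAdd a.left ((a.right⁻¹).symm i)) = _
  rw [z2neg]
  rfl

lemma rinv0 (a : G0 n) : (a⁻¹).right = a.right⁻¹ := rfl

lemma mem_G1 {g : G0 n} : g ∈ G1 n ↔ ∑ i, Av g i = 0 := by
  show Multiplicative.ofAdd (∑ i, Av g i) = 1 ↔ _
  constructor
  · intro h; simpa using congrArg Multiplicative.toAdd h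
  · intro h; rw [h]; rfl

lemma mem_G2 {g : G0 n} : g ∈ G2 n ↔ (∑ i, Av g i) + sg g.right = 0 := by
  show Multiplicative.ofAdd ((∑ i, Av g i) + sgn2 g.right) = 1 ↔ _
  constructor
  · intro h; exact (by simpa using congrArg Multiplicative.toAdd h : (∑ i, Av g i) + sgn2 g.right = 0)
  · intro h
    show Multiplicative.ofAdd ((∑ i, Av g i) + sg g.right) = 1
    rw [h]; rfl

lemma mem_G3 {g : G0 n} : g ∈ G3 n ↔ (Av g = 0 ∨ Av g = fun _ => 1) := Iff.rfl

end G0Helpers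

section Lifts

open SemidirectProduct

variable {n : ℕ}

lemma G0ext {a b : G0 n} (h1 : Av a = Av b) (h2 : a.right = b.right) : a = b := by
  have h1' : a.left = b.left := by
    have := congrArg Multiplicative.ofAdd h1
    simpa using this
  exact SemidirectProduct.ext h1' h2

lemma exists_lift {K : Subgroup (G0 n)} (h : K.map SemidirectProduct.rightHom = ⊤)
    (σ : Equiv.Perm (Fin n)) : ∃ g ∈ K, g.right = σ := by
  have hσ : σ ∈ K.map (SemidirectProduct.rightHom (φ := permAction n)) := by
    rw [h]; trivial
  obtain ⟨g, hg, hg2⟩ := Subgroup.mem_map.1 hσ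
  exact ⟨g, hg, hg2⟩

lemma conj_mem {K : Subgroup (G0 n)} (hs : ∀ σ, ∃ g ∈ K, g.right = σ)
    {v : Fin n → ZMod 2} (hv : mke v 1 ∈ K) (σ : Equiv.Perm (Fin n)) :
    mke (fun i => v (σ⁻¹ i)) 1 ∈ K := by
  obtain ⟨h, hK, hr⟩ := hs σ
  have key : h * mke v 1 * h⁻¹ = mke (fun i => v (σ⁻¹ i)) 1 := by
    apply G0ext
    · funext i
      rw [show Av (h * mke v 1 * h⁻¹) i
            = Av (h * mke v 1) i + Av h⁻¹ ((h * mke v 1).right⁻¹ i) from rfl]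
      rw [Av_inv, Av_mul]
      have hrr : (h * mke v 1).right = σ := by rw [right_mul, right_mke, mul_one, hr]
      rw [hrr, Av_mke, hr]
      simp only [show ∀ x, σ (σ⁻¹ x) = x from fun x => σ.apply_symm_apply x]
      rw [z2aba]
      rfl
    · rw [right_mul, right_mul, right_mke, rinv0, hr, right_mke, mul_one,
        mul_inv_cancel]
  rw [← key]
  exact K.mul_mem (K.mul_mem hK hv) (K.inv_mem hK)

lemma mul_mke_one {v w : Fin n → ZMod 2} : mke v 1 * mke w 1 = mke (v + w) 1 := by
  apply G0ext
  · funext i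
    rw [Av_mul, Av_mke, Av_mke, right_mke]
    rfl
  · rw [right_mul, right_mke, right_mke, mul_one, right_mke]

lemma exists_perm_pair {i j a b : Fin n} (hij : i ≠ j) (hab : a ≠ b) :
    ∃ σ : Equiv.Perm (Fin n), σ i = a ∧ σ j = b := by
  refine ⟨Equiv.swap (Equiv.swap i a j) b * Equiv.swap i a, ?_, ?_⟩
  · have h1 : Equiv.swap i a j ≠ a := by
      intro h
      have hj : j = i :=
        Equiv.injective (Equiv.swap i a) (h.trans (Equiv.swap_apply_left i a).symm)
      exact hij hj.symm
    simp only [Equiv.Perm.mul_apply, Equiv.swap_apply_left]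
    exact Equiv.swap_apply_of_ne_of_ne (Ne.symm h1) hab
  · simp only [Equiv.Perm.mul_apply]
    exact Equiv.swap_apply_left _ _

end Lifts

section EqTop

variable {n : ℕ}

lemma z2abb : ∀ a b : ZMod 2, a + b + b = a := by decide

lemma mke_zero_eq_one : mke (0 : Fin n → ZMod 2) 1 = 1 := rfl

lemma pair_mem {K : Subgroup (G0 n)} (hs : ∀ σ, ∃ g ∈ K, g.right = σ)
    {w : Fin n → ZMod 2} (hw : mke w 1 ∈ K) {i j : Fin n} (hij : w i ≠ w j)
    {a b : Fin n} (hab : a ≠ b) :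
    ∃ u : Fin n → ZMod 2, mke u 1 ∈ K ∧ u a = 1 ∧ u b = 1 ∧
      ∀ k, k ≠ a → k ≠ b → u k = 0 := by
  have hij' : i ≠ j := fun h => hij (by rw [h])
  obtain ⟨σ, hσi, hσj⟩ := exists_perm_pair hij' hab
  have hσa : σ⁻¹ a = i := by rw [← hσi]; simp
  have hσb : σ⁻¹ b = j := by rw [← hσj]; simp
  set w' : Fin n → ZMod 2 := fun k => w (σ⁻¹ k) with hw'
  have hw'K : mke w' 1 ∈ K := conj_mem hs hw σ
  set u : Fin n → ZMod 2 := fun k => w' ((Equiv.swap a b)⁻¹ k) + w' k with hu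
  have huK : mke u 1 ∈ K := by
    have h1 : mke (fun k => w' ((Equiv.swap a b)⁻¹ k)) 1 ∈ K :=
      conj_mem hs hw'K (Equiv.swap a b)
    have h2 := K.mul_mem h1 hw'K
    rw [mul_mke_one] at h2
    exact h2
  refine ⟨u, huK, ?_, ?_, ?_⟩
  · show w' ((Equiv.swap a b)⁻¹ a) + w' a = 1
    rw [Equiv.swap_inv, Equiv.swap_apply_left, hw']
    simp only [hσa, hσb]
    exact z2ne _ _ (Ne.symm hij)
  · show w' ((Equiv.swap a b)⁻¹ b) + w' b = 1
    rw [Equiv.swap_inv, Equiv.swap_apply_right, hw']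
    simp only [hσa, hσb]
    exact z2ne _ _ hij
  · intro k hka hkb
    show w' ((Equiv.swap a b)⁻¹ k) + w' k = 0
    rw [Equiv.swap_inv, Equiv.swap_apply_of_ne_of_ne hka hkb]
    exact z2addself _

lemma sum_eq_card (v : Fin n → ZMod 2) :
    ∑ k, v k = ((Finset.univ.filter (fun k => v k = 1)).card : ZMod 2) := by
  rw [← Finset.sum_filter_add_sum_filter_not Finset.univ (fun k => v k = 1)]
  have h1 : ∑ k ∈ Finset.univ.filter (fun k => v k = 1), v k
      = ((Finset.univ.filter (fun k => v k = 1)).card : ZMod 2) := by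
    rw [Finset.sum_congr rfl (fun k hk => (Finset.mem_filter.1 hk).2), Finset.sum_const,
      nsmul_eq_mul, mul_one]
  have h2 : ∑ k ∈ Finset.univ.filter (fun k => ¬ v k = 1), v k = 0 := by
    apply Finset.sum_eq_zero
    intro k hk
    rcases z2cases (v k) with h | h
    · exact h
    · exact absurd h (Finset.mem_filter.1 hk).2
  rw [h1, h2, add_zero]

lemma sumzero_mem {K : Subgroup (G0 n)} (hs : ∀ σ, ∃ g ∈ K, g.right = σ)
    {w : Fin n → ZMod 2} (hw : mke w 1 ∈ K) {i j : Fin n} (hij : w i ≠ w j) :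
    ∀ v : Fin n → ZMod 2, ∑ k, v k = 0 → mke v 1 ∈ K := by
  suffices H : ∀ m : ℕ, ∀ v : Fin n → ZMod 2,
      (Finset.univ.filter (fun k => v k = 1)).card = m → ∑ k, v k = 0 → mke v 1 ∈ K by
    intro v hv
    exact H _ v rfl hv
  intro m
  induction m using Nat.strong_induction_on with
  | _ m IH =>
    intro v hm hv
    rcases Nat.eq_zero_or_pos m with h0 | hpos
    · have hv0 : v = 0 := by
        funext k
        rcases z2cases (v k) with h | h
        · exact h
        · exfalso
          have : k ∈ Finset.univ.filter (fun k => v k = 1) := by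
            simp [h]
          rw [Finset.card_eq_zero.1 (hm.trans h0)] at this
          simp at this
      rw [hv0, mke_zero_eq_one]
      exact K.one_mem
    · -- card is even and positive, so ≥ 2
      have heven : (2 : ℕ) ∣ m := by
        rw [← ZMod.natCast_eq_zero_iff]
        rw [← hm, ← sum_eq_card, hv]
      have h2m : 2 ≤ m := by omega
      obtain ⟨a, ha, b, hb, hab⟩ := Finset.one_lt_card.1 (by omega : 1 < (Finset.univ.filter (fun k => v k = 1)).card)
      have hva : v a = 1 := (Finset.mem_filter.1 ha).2
      have hvb : v b = 1 := (Finset.mem_filter.1 hb).2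
      obtain ⟨u, huK, hua, hub, hu0⟩ := pair_mem hs hw hij hab
      set v' : Fin n → ZMod 2 := v + u with hv'
      have hv'a : v' a = 0 := by show v a + u a = 0; rw [hva, hua]; decide
      have hv'b : v' b = 0 := by show v b + u b = 0; rw [hvb, hub]; decide
      have hv'k : ∀ k, k ≠ a → k ≠ b → v' k = v k := by
        intro k h h'
        show v k + u k = v k
        rw [hu0 k h h', add_zero]
      have hfilt : Finset.univ.filter (fun k => v' k = 1)
          = (Finset.univ.filter (fun k => v k = 1)) \ {a, b} := by
        ext k
        simp only [Finset.mem_filter, Finset.mem_sdiff, Finset.mem_univ, true_and,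
          Finset.mem_insert, Finset.mem_singleton]
        constructor
        · intro hk
          by_cases hka : k = a
          · rw [hka, hv'a] at hk; exact absurd hk (by decide)
          · by_cases hkb : k = b
            · rw [hkb, hv'b] at hk; exact absurd hk (by decide)
            · exact ⟨by rwa [hv'k k hka hkb] at hk, fun h => h.elim hka hkb⟩
        · rintro ⟨hk1, hk2⟩
          push_neg at hk2
          rw [hv'k k hk2.1 hk2.2]
          exact hk1
      have hsub : ({a, b} : Finset (Fin n)) ⊆ Finset.univ.filter (fun k => v k = 1) := by
        rw [Finset.insert_subset_iff, Finset.singleton_subset_iff]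
        exact ⟨ha, hb⟩
      have hcard : (Finset.univ.filter (fun k => v' k = 1)).card = m - 2 := by
        rw [hfilt, Finset.card_sdiff_of_subset hsub, hm, Finset.card_pair hab]
      have hsum' : ∑ k, v' k = 0 := by
        rw [sum_eq_card, hcard, ZMod.natCast_eq_zero_iff]
        omega
      have hK' : mke v' 1 ∈ K := IH (m - 2) (by omega) v' hcard hsum'
      have hfin := K.mul_mem hK' huK
      rw [mul_mke_one] at hfin
      have hvv : v' + u = v := by
        funext k
        exact z2abb (v k) (u k)
      rwa [hvv] at hfin

lemma eq_top_of {K : Subgroup (G0 n)} (hs : ∀ σ, ∃ g ∈ K, g.right = σ)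
    {w1 : Fin n → ZMod 2} (h1 : mke w1 1 ∈ K) (hs1 : ∑ k, w1 k = 1)
    {w : Fin n → ZMod 2} (hw : mke w 1 ∈ K) {i j : Fin n} (hij : w i ≠ w j) : K = ⊤ := by
  have hall : ∀ v : Fin n → ZMod 2, mke v 1 ∈ K := by
    intro v
    rcases z2cases (∑ k, v k) with h0 | h0
    · exact sumzero_mem hs hw hij v h0
    · have hsv : ∑ k, (v + w1) k = 0 := by
        show ∑ k, (v k + w1 k) = 0
        rw [Finset.sum_add_distrib, h0, hs1]
        decide
      have hm := K.mul_mem (sumzero_mem hs hw hij (v + w1) hsv) h1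
      rw [mul_mke_one] at hm
      have : v + w1 + w1 = v := by funext k; exact z2abb (v k) (w1 k)
      rwa [this] at hm
  rw [Subgroup.eq_top_iff']
  intro g
  obtain ⟨h, hK, hr⟩ := hs g.right
  have hgh : (g * h⁻¹).right = 1 := by
    rw [right_mul, rinv0, hr, mul_inv_cancel]
  have hmem : g * h⁻¹ ∈ K := by
    have : g * h⁻¹ = mke (Av (g * h⁻¹)) 1 := by
      rw [← hgh]
      exact (mke_self _).symm
    rw [this]
    exact hall _
  have : (g * h⁻¹) * h = g := by group
  rw [← this]
  exact K.mul_mem hmem hK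

end EqTop

section MainLemma

variable {n : ℕ}

lemma z2eq : ∀ a b : ZMod 2, a + b = 0 → a = b := by decide
lemma z2symm0 : ∀ a b : ZMod 2, 0 = a + b → b = a := by decide
lemma z2selfadd : ∀ a : ZMod 2, a = a + a → a = 0 := by decide

lemma sum_Av_mul (a b : G0 n) : ∑ k, Av (a * b) k = (∑ k, Av a k) + ∑ k, Av b k := by
  simp only [Av_mul]
  rw [Finset.sum_add_distrib]
  congr 1
  exact Equiv.sum_comp (a.right⁻¹ : Equiv.Perm (Fin n)) (fun k => Av b k)

lemma sum_Av_inv (a : G0 n) : ∑ k, Av a⁻¹ k = ∑ k, Av a k := by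
  simp only [Av_inv]
  exact Equiv.sum_comp (a.right : Equiv.Perm (Fin n)) (fun k => Av a k)

lemma exists_ne_of_not_const (hn : 1 ≤ n) {w : Fin n → ZMod 2}
    (h : ¬(w = 0 ∨ w = fun _ => 1)) : ∃ i j, w i ≠ w j := by
  by_contra hc
  push_neg at hc
  apply h
  rcases z2cases (w ⟨0, hn⟩) with h0 | h0
  · left; funext k; rw [hc k ⟨0, hn⟩, h0]; rfl
  · right; funext k; rw [hc k ⟨0, hn⟩, h0]

lemma sum_const_one : ∑ _k : Fin n, (1 : ZMod 2) = (n : ZMod 2) := by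
  rw [Finset.sum_const, Finset.card_univ, Fintype.card_fin, nsmul_eq_mul, mul_one]

lemma odd_cast_one (hodd : Odd n) : ((n : ℕ) : ZMod 2) = 1 := by
  obtain ⟨m, hm⟩ := hodd
  subst hm
  push_cast
  rw [show ((2 : ZMod 2)) = 0 by decide]
  ring

end MainLemma

section TheMain

open Equiv Multiplicative

lemma main_lemma {n : ℕ} (hn : 1 ≤ n) (K : Subgroup (G0 n)) (hK : K ≠ ⊤)
    (hproj : K.map SemidirectProduct.rightHom = ⊤) :
    K ≤ G1 n ∨ K ≤ G2 n ∨
      (3 ≤ n ∧ Odd n ∧ ∃ v : Fin n → ZMod 2,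
        ∀ g ∈ K, mke v 1 * g * mke v 1 ∈ G3 n) := by
  have hs : ∀ σ, ∃ g ∈ K, g.right = σ := exists_lift hproj
  by_cases h1 : K ≤ G1 n
  · exact Or.inl h1
  by_cases h2 : K ≤ G2 n
  · exact Or.inr (Or.inl h2)
  right; right
  have hn1 : n ≠ 1 := by
    rintro rfl
    apply h1
    intro g hg
    rw [mem_G1]
    by_contra hne
    apply hK
    have hg1 : Av g ⟨0, by omega⟩ = 1 := by
      apply z2nz
      intro h0
      apply hne
      rw [show (∑ k, Av g k) = Av g ⟨0, by omega⟩ from by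
        rw [Finset.sum_eq_single ⟨0, by omega⟩]
        · intro b _ hb; exact absurd (Subsingleton.elim b _) hb
        · intro hb; exact absurd (Finset.mem_univ _) hb, h0]
    rw [Subgroup.eq_top_iff']
    intro x
    have hxr : x.right = g.right := Equiv.ext fun a => Subsingleton.elim _ _
    rcases z2cases (Av x ⟨0, by omega⟩) with h0 | h0
    · have hx1 : x = 1 := by
        apply G0ext
        · funext k
          rw [Subsingleton.elim k ⟨0, by omega⟩, h0]
          rfl
        · exact Equiv.ext fun a => Subsingleton.elim _ _
      rw [hx1]; exact K.one_mem
    · have hxg : x = g := by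
        apply G0ext
        · funext k
          rw [Subsingleton.elim k ⟨0, by omega⟩, h0, hg1]
        · exact hxr
      rw [hxg]; exact hg
  have hn2 : 2 ≤ n := by omega
  -- Claim 1: there is an element of the kernel part with odd coordinate sum
  have hw1 : ∃ w1 : Fin n → ZMod 2, mke w1 1 ∈ K ∧ ∑ k, w1 k = 1 := by
    by_contra hcon
    push_neg at hcon
    have hc' : ∀ v : Fin n → ZMod 2, mke v 1 ∈ K → ∑ k, v k = 0 := by
      intro v hv
      rcases z2cases (∑ k, v k) with h | h
      · exact h
      · exact absurd h (hcon v hv)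
    have hker : ∀ x ∈ K, x.right = 1 → ∑ k, Av x k = 0 := by
      intro x hx hxr
      have hx' : x = mke (Av x) 1 := by rw [← hxr]; exact (mke_self x).symm
      exact hc' _ (hx' ▸ hx)
    have hwd : ∀ x ∈ K, ∀ y ∈ K, x.right = y.right → ∑ k, Av x k = ∑ k, Av y k := by
      intro x hx y hy hxy
      have hmem : x * y⁻¹ ∈ K := K.mul_mem hx (K.inv_mem hy)
      have hr1 : (x * y⁻¹).right = 1 := by rw [right_mul, rinv0, hxy, mul_inv_cancel]
      have h0 := hker _ hmem hr1
      rw [sum_Av_mul, sum_Av_inv] at h0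
      exact z2eq _ _ h0
    choose L hLK hLr using hs
    have hφmul : ∀ σ τ : Equiv.Perm (Fin n),
        (fun σ => ofAdd (∑ k, Av (L σ) k)) (σ * τ)
          = (fun σ => ofAdd (∑ k, Av (L σ) k)) σ * (fun σ => ofAdd (∑ k, Av (L σ) k)) τ := by
      intro σ τ
      have hmem : L σ * L τ ∈ K := K.mul_mem (hLK σ) (hLK τ)
      have hr : (L (σ * τ)).right = (L σ * L τ).right := by
        rw [right_mul, hLr, hLr, hLr]
      have h3 := hwd _ (hLK (σ * τ)) _ hmem hr
      show ofAdd (∑ k, Av (L (σ * τ)) k) = ofAdd (∑ k, Av (L σ) k) * ofAdd (∑ k, Av (L τ) k)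
      rw [h3, sum_Av_mul]
      exact ofAdd_add _ _
    set φ : Equiv.Perm (Fin n) →* Multiplicative (ZMod 2) := MonoidHom.mk' (fun σ => ofAdd (∑ k, Av (L σ) k)) hφmul with hφ
    have hne01 : (⟨0, by omega⟩ : Fin n) ≠ ⟨1, by omega⟩ := by
      intro h
      exact absurd (congrArg Fin.val h) (by norm_num)
    have hval : ∀ g ∈ K, ∑ k, Av g k = toAdd (φ g.right) * 1 := by
      intro g hg
      rw [mul_one]
      have := hwd g hg (L g.right) (hLK _) (hLr _).symm
      rw [this]
      rfl
    set ε := toAdd (φ (Equiv.swap ⟨0, by omega⟩ ⟨1, by omega⟩)) with hεd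
    rcases z2cases ε with hε | hε
    · apply h1
      intro g hg
      rw [mem_G1]
      rw [hval g hg, mul_one, hom_perm_eq φ hne01 g.right, toAdd_ofAdd, ← hεd, hε, zero_mul]
    · apply h2
      intro g hg
      rw [mem_G2]
      rw [hval g hg, mul_one, hom_perm_eq φ hne01 g.right, toAdd_ofAdd, ← hεd, hε, one_mul]
      show sg g.right + sg g.right = 0
      exact z2addself _
  obtain ⟨w1, hw1K, hw1s⟩ := hw1
  -- all purely-vector elements of K are constant vectors
  have hconst : ∀ v : Fin n → ZMod 2, mke v 1 ∈ K → (v = 0 ∨ v = fun _ => 1) := by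
    intro v hv
    by_contra hcv
    obtain ⟨i, j, hij⟩ := exists_ne_of_not_const hn hcv
    exact hK (eq_top_of hs hw1K hw1s hv hij)
  have hw1c : w1 = fun _ => 1 := by
    rcases hconst w1 hw1K with h | h
    · exfalso
      rw [h] at hw1s
      simp at hw1s
    · exact h
  have hnodd : Odd n := by
    rw [hw1c, sum_const_one] at hw1s
    rw [Nat.odd_iff]
    have := congrArg ZMod.val hw1s
    rwa [ZMod.val_natCast, show (1 : ZMod 2).val = 1 from rfl] at this
  have hn3 : 3 ≤ n := by
    obtain ⟨m, hm⟩ := hnodd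
    omega
  refine ⟨hn3, hnodd, ?_⟩
  have hcastn : ((n : ℕ) : ZMod 2) = 1 := odd_cast_one hnodd
  choose L hLK hLr using hs
  set c : Equiv.Perm (Fin n) → Fin n → ZMod 2 :=
    fun σ i => Av (L σ) i + (if ∑ k, Av (L σ) k = 0 then 0 else 1) with hcdef
  have hcK : ∀ σ, mke (c σ) σ ∈ K := by
    intro σ
    by_cases h : ∑ k, Av (L σ) k = 0
    · have he : mke (c σ) σ = L σ := by
        apply G0ext
        · funext i
          rw [Av_mke, hcdef]
          simp [h]
        · rw [right_mke, hLr]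
      rw [he]; exact hLK σ
    · have he : mke (c σ) σ = mke w1 1 * L σ := by
        apply G0ext
        · funext i
          rw [Av_mke, hcdef, Av_mul, Av_mke, right_mke, hw1c]
          simp only [h, if_neg, if_false]
          rw [add_comm]
          simp
        · rw [right_mul, right_mke, right_mke, one_mul, hLr]
      rw [he]; exact K.mul_mem hw1K (hLK σ)
  have hcsum : ∀ σ, ∑ k, c σ k = 0 := by
    intro σ
    by_cases h : ∑ k, Av (L σ) k = 0
    · simp only [hcdef, h, if_pos, add_zero]
    · simp only [hcdef, h, if_neg, if_false]
      rw [Finset.sum_add_distrib, sum_const_one, hcastn, z2nz _ h]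
      decide
  have hU : ∀ x ∈ K, x.right = 1 → (Av x = 0 ∨ Av x = fun _ => 1) := by
    intro x hx hr
    apply hconst
    have he : mke (Av x) 1 = x := by rw [← hr]; exact mke_self x
    rwa [he]
  have hAvc : ∀ g ∈ K, Av g = c g.right ∨ Av g = fun i => c g.right i + 1 := by
    intro g hg
    have hdK : g * (mke (c g.right) g.right)⁻¹ ∈ K := K.mul_mem hg (K.inv_mem (hcK g.right))
    set d := g * (mke (c g.right) g.right)⁻¹ with hd
    have hdr : d.right = 1 := by rw [hd, right_mul, rinv0, right_mke, mul_inv_cancel]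
    have hback : g = d * mke (c g.right) g.right := by rw [hd]; group
    have hAvg : ∀ i, Av g i = Av d i + c g.right i := by
      intro i
      conv_lhs => rw [hback]
      rw [Av_mul, Av_mke, hdr]
      simp
    rcases hU d hdK hdr with h | h
    · left
      funext i
      rw [hAvg i, congrFun h i]
      show (0 : ZMod 2) + _ = _
      rw [zero_add]
    · right
      funext i
      rw [hAvg i, congrFun h i, add_comm]
  have hcoc : ∀ σ τ : Equiv.Perm (Fin n), ∀ i, c (σ * τ) i = c σ i + c τ (σ⁻¹ i) := by
    intro σ τ
    have hx : mke (c σ) σ * mke (c τ) τ ∈ K := K.mul_mem (hcK σ) (hcK τ)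
    have hxr : (mke (c σ) σ * mke (c τ) τ).right = σ * τ := by
      rw [right_mul, right_mke, right_mke]
    have hAv : ∀ i, Av (mke (c σ) σ * mke (c τ) τ) i = c σ i + c τ (σ⁻¹ i) := by
      intro i
      rw [Av_mul, Av_mke, Av_mke, right_mke]
    rcases hAvc _ hx with h | h
    · intro i
      rw [hxr] at h
      rw [← congrFun h i]
      exact hAv i
    · exfalso
      rw [hxr] at h
      have hsum1 : ∑ k, Av (mke (c σ) σ * mke (c τ) τ) k = 0 := by
        rw [Finset.sum_congr rfl (fun k _ => hAv k), Finset.sum_add_distrib, hcsum,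
          Equiv.sum_comp (σ⁻¹ : Equiv.Perm (Fin n)) (fun k => c τ k), hcsum, add_zero]
      rw [h] at hsum1
      rw [Finset.sum_add_distrib, hcsum, sum_const_one, hcastn, zero_add] at hsum1
      exact absurd hsum1 (by decide)
  have hc1 : ∀ i, c 1 i = 0 := by
    intro i
    have h := hcoc 1 1 i
    rw [one_mul] at h
    have h2 : ((1 : Equiv.Perm (Fin n))⁻¹ : Equiv.Perm (Fin n)) i = i := by simp
    rw [h2] at h
    exact z2selfadd _ h
  have hcinv : ∀ (σ : Equiv.Perm (Fin n)) (i), c σ⁻¹ i = c σ (σ i) := by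
    intro σ i
    have h := hcoc σ σ⁻¹ (σ i)
    rw [mul_inv_cancel, hc1] at h
    rw [show σ⁻¹ (σ i) = i from σ.symm_apply_apply i] at h
    exact z2symm0 _ _ h
  -- stabilizer values
  have h0ne1 : (⟨1, by omega⟩ : Fin n) ≠ ⟨0, by omega⟩ := by
    intro h; exact absurd (congrArg Fin.val h) (by norm_num)
  have h0ne2 : (⟨2, by omega⟩ : Fin n) ≠ ⟨0, by omega⟩ := by
    intro h; exact absurd (congrArg Fin.val h) (by norm_num)
  have h1ne2 : (⟨1, by omega⟩ : Fin n) ≠ ⟨2, by omega⟩ := by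
    intro h; exact absurd (congrArg Fin.val h) (by norm_num)
  set i0 : Fin n := ⟨0, by omega⟩ with hi0
  set ε : ZMod 2 := c (Equiv.swap ⟨1, by omega⟩ ⟨2, by omega⟩) i0 with hεd
  have hstab : ∀ τ : Equiv.Perm (Fin n), τ i0 = i0 → c τ i0 = ε * sg τ := by
    have hfix : ∀ ρ : Equiv.Perm {x : Fin n // x ≠ i0},
        Equiv.Perm.ofSubtype ρ i0 = i0 := fun ρ =>
      Equiv.Perm.ofSubtype_apply_of_not_mem ρ (by simp)
    have hfixinv : ∀ ρ : Equiv.Perm {x : Fin n // x ≠ i0},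
        (Equiv.Perm.ofSubtype ρ)⁻¹ i0 = i0 := by
      intro ρ
      exact Equiv.Perm.inv_eq_iff_eq.mpr (hfix ρ).symm
    have hψmul : ∀ ρ ρ' : Equiv.Perm {x : Fin n // x ≠ i0},
        (fun ρ => ofAdd (c (Equiv.Perm.ofSubtype ρ) i0)) (ρ * ρ')
          = (fun ρ => ofAdd (c (Equiv.Perm.ofSubtype ρ) i0)) ρ
            * (fun ρ => ofAdd (c (Equiv.Perm.ofSubtype ρ) i0)) ρ' := by
      intro ρ ρ'
      show ofAdd (c (Equiv.Perm.ofSubtype (ρ * ρ')) i0) = _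
      rw [map_mul, hcoc _ _ i0, hfixinv]
      exact ofAdd_add _ _
    set ψ : Equiv.Perm {x : Fin n // x ≠ i0} →* Multiplicative (ZMod 2) :=
      MonoidHom.mk' (fun ρ => ofAdd (c (Equiv.Perm.ofSubtype ρ) i0)) hψmul with hψdef
    have hxx : (⟨⟨1, by omega⟩, h0ne1⟩ : {x : Fin n // x ≠ i0})
        ≠ ⟨⟨2, by omega⟩, h0ne2⟩ := by
      intro h
      exact h1ne2 (congrArg Subtype.val h)
    intro τ hτ
    have h₁ : ∀ x, τ x ≠ i0 ↔ x ≠ i0 := by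
      intro x
      have : τ x = i0 ↔ x = i0 :=
        ⟨fun h => τ.injective (h.trans hτ.symm), fun h => by rw [h, hτ]⟩
      exact not_congr this
    have hof : Equiv.Perm.ofSubtype (τ.subtypePerm h₁) = τ :=
      Equiv.Perm.ofSubtype_subtypePerm (p := fun x => x ≠ i0) h₁ (fun x hxx2 hxi => hxx2 (by rw [hxi, hτ]))
    have hkey := hom_perm_eq ψ hxx (τ.subtypePerm h₁)
    have hlhs : ψ (τ.subtypePerm h₁) = ofAdd (c τ i0) := by
      rw [hψdef]
      show ofAdd (c (Equiv.Perm.ofSubtype (τ.subtypePerm h₁)) i0) = _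
      rw [hof]
    have hswapval : ψ (Equiv.swap ⟨⟨1, by omega⟩, h0ne1⟩ ⟨⟨2, by omega⟩, h0ne2⟩)
        = ofAdd ε := by
      rw [hψdef]
      show ofAdd (c (Equiv.Perm.ofSubtype
        (Equiv.swap ⟨⟨1, by omega⟩, h0ne1⟩ ⟨⟨2, by omega⟩, h0ne2⟩)) i0) = _
      rw [Equiv.Perm.ofSubtype_swap_eq]
    have hsg : sg (τ.subtypePerm (p := fun x => x ≠ i0) h₁) = sg τ := by
      have hsign : Equiv.Perm.sign (τ.subtypePerm (p := fun x => x ≠ i0) h₁) = Equiv.Perm.sign τ := by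
        rw [← Equiv.Perm.sign_ofSubtype, hof]
      unfold sg
      rw [hsign]
    rw [hlhs, hswapval, toAdd_ofAdd, hsg] at hkey
    have := congrArg toAdd hkey
    rwa [toAdd_ofAdd, toAdd_ofAdd] at this
  -- the conjugating vector
  set gg : Fin n → Equiv.Perm (Fin n) :=
    fun i => if i = i0 then 1 else Equiv.swap i0 i with hggdef
  have hgg_i0 : ∀ i, gg i i0 = i := by
    intro i
    rw [hggdef]
    by_cases h : i = i0
    · simp [h]
    · simp [h, Equiv.swap_apply_left]
  have hgg_i : ∀ i, gg i i = i0 := by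
    intro i
    rw [hggdef]
    by_cases h : i = i0
    · simp [h]
    · simp [h, Equiv.swap_apply_right]
  have hgg_inv : ∀ i, (gg i)⁻¹ = gg i := by
    intro i
    rw [hggdef]
    by_cases h : i = i0
    · simp [h]
    · simp [h, Equiv.swap_inv]
  set vv : Fin n → ZMod 2 := fun i => c (gg i) i with hvvdef
  have hformula : ∀ (σ : Equiv.Perm (Fin n)) (i : Fin n),
      c σ i = vv i + vv (σ⁻¹ i) + ε * (sg (gg i) + sg (gg (σ⁻¹ i)) + sg σ) := by
    intro σ i
    set j : Fin n := σ⁻¹ i with hj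
    have hτfix : ((gg j)⁻¹ * (σ⁻¹ * gg i)) i0 = i0 := by
      simp only [Equiv.Perm.mul_apply, hgg_i0]
      rw [hj, hgg_inv, hgg_i]
    have hτ := hstab _ hτfix
    -- expand c of the product in two ways
    have hexp : c ((gg j) * ((gg j)⁻¹ * (σ⁻¹ * gg i))) j
        = c (gg j) j + c ((gg j)⁻¹ * (σ⁻¹ * gg i)) i0 := by
      rw [hcoc]
      congr 1
      rw [hgg_inv, hgg_i]
    have hgrp : (gg j) * ((gg j)⁻¹ * (σ⁻¹ * gg i)) = σ⁻¹ * gg i := by group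
    rw [hgrp] at hexp
    have hexp2 : c (σ⁻¹ * gg i) j = c σ⁻¹ j + c (gg i) (σ j) := by
      rw [hcoc, inv_inv]
    have hσj : σ j = i := by rw [hj]; simp
    have hcinvj : c σ⁻¹ j = c σ i := by rw [hcinv, hσj]
    rw [hexp2, hcinvj, hσj, hτ] at hexp
    -- hexp : c σ i + c (gg i) i = c (gg j) j + ε * sg (...)
    have hsgτ : sg ((gg j)⁻¹ * (σ⁻¹ * gg i)) = sg (gg i) + sg (gg j) + sg σ := by
      rw [sg_mul, sg_mul, sg_inv, sg_inv]
      ring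
    rw [hsgτ] at hexp
    -- rearrange over ZMod 2
    have z2move : ∀ a vi vj e : ZMod 2, a + vi = vj + e → a = vi + vj + e := by decide
    exact z2move _ _ _ _ hexp
  have hε0 : ε = 0 := by
    set σ0 : Equiv.Perm (Fin n) := Equiv.swap i0 ⟨1, by omega⟩ with hσ0
    have hsgσ0 : sg σ0 = 1 := sg_swap (Ne.symm h0ne1)
    have hsum := hcsum σ0
    have hrw : ∀ i, c σ0 i = vv i + vv (σ0⁻¹ i) + ε * (sg (gg i) + sg (gg (σ0⁻¹ i)) + 1) := by
      intro i
      rw [hformula σ0 i, hsgσ0]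
    rw [Finset.sum_congr rfl (fun i _ => hrw i)] at hsum
    rw [Finset.sum_add_distrib, Finset.sum_add_distrib, ← Finset.mul_sum] at hsum
    rw [Equiv.sum_comp (σ0⁻¹ : Equiv.Perm (Fin n)) vv] at hsum
    rw [z2addself, zero_add] at hsum
    have hinner : ∑ i, (sg (gg i) + sg (gg (σ0⁻¹ i)) + 1) = 1 := by
      rw [Finset.sum_add_distrib, Finset.sum_add_distrib,
        Equiv.sum_comp (σ0⁻¹ : Equiv.Perm (Fin n)) (fun i => sg (gg i)), sum_const_one, hcastn,
        z2addself, zero_add]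
    rw [hinner, mul_one] at hsum
    exact hsum
  refine ⟨vv, ?_⟩
  intro g hg
  rw [mem_G3]
  have hAvconj : ∀ i, Av (mke vv 1 * g * mke vv 1) i = vv i + Av g i + vv (g.right⁻¹ i) := by
    intro i
    rw [Av_mul, Av_mul, Av_mke]
    simp [right_mul]
  have hform0 : ∀ i, c g.right i = vv i + vv (g.right⁻¹ i) := by
    intro i
    rw [hformula g.right i, hε0, zero_mul, add_zero]
  have z2q1 : ∀ a b : ZMod 2, a + (a + b) + b = 0 := by decide
  have z2q2 : ∀ a b : ZMod 2, a + (a + b + 1) + b = 1 := by decide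
  rcases hAvc g hg with h | h
  · left
    funext i
    show Av (mke vv 1 * g * mke vv 1) i = 0
    rw [hAvconj i, congrFun h i, hform0 i]
    exact z2q1 _ _
  · right
    funext i
    show Av (mke vv 1 * g * mke vv 1) i = 1
    rw [hAvconj i, congrFun h i, hform0 i]
    exact z2q2 _ _

end TheMain

section Assembly

open Equiv Multiplicative SemidirectProduct

variable {n : ℕ}

lemma coatom_ker {G : Type*} [Group G] (f : G →* Multiplicative (ZMod 2)) (x : G)
    (hx : f x ≠ 1) : IsCoatom f.ker := by
  constructor
  · intro h
    exact hx (MonoidHom.mem_ker.mp (h ▸ Subgroup.mem_top x))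
  · intro b hb
    obtain ⟨y, hyb, hyk⟩ := SetLike.exists_of_lt hb
    rw [Subgroup.eq_top_iff']
    intro g
    by_cases hg : f g = 1
    · exact hb.le (MonoidHom.mem_ker.mpr hg)
    · have h2 : f g = f y := by
        have hall : ∀ u v : Multiplicative (ZMod 2), u ≠ 1 → v ≠ 1 → u = v := by decide
        exact hall _ _ hg (fun h => hyk (MonoidHom.mem_ker.mpr h))
      have h3 : g * y⁻¹ ∈ f.ker := by
        rw [MonoidHom.mem_ker, map_mul, map_inv, h2, mul_inv_cancel]
      have h4 : g = (g * y⁻¹) * y := by group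
      rw [h4]
      exact b.mul_mem (hb.le h3) hyb

/-- the basis-like vector -/
def dlt (hn : 1 ≤ n) : Fin n → ZMod 2 := fun k => if k = ⟨0, hn⟩ then 1 else 0

lemma sum_dlt (hn : 1 ≤ n) : ∑ k, dlt hn k = 1 := by
  unfold dlt
  simp

lemma sumHom_apply (g : G0 n) : sumHom n g = ofAdd (∑ k, Av g k) := rfl
lemma sumSgnHom_apply (g : G0 n) : sumSgnHom n g = ofAdd ((∑ k, Av g k) + sg g.right) := rfl

lemma dlt_not_G1 (hn : 1 ≤ n) : mke (dlt hn) 1 ∉ G1 n := by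
  rw [mem_G1, Av_mke, sum_dlt]
  decide

lemma dlt_not_G2 (hn : 1 ≤ n) : mke (dlt hn) 1 ∉ G2 n := by
  rw [mem_G2, Av_mke, right_mke, sum_dlt, sg_one, add_zero]
  decide

lemma dlt_not_G3 (hn2 : 2 ≤ n) : mke (dlt (by omega)) 1 ∉ G3 n := by
  rw [mem_G3, Av_mke]
  rintro (h | h)
  · have := congrFun h ⟨0, by omega⟩
    rw [show dlt (by omega : 1 ≤ n) ⟨0, by omega⟩ = 1 from if_pos rfl, Pi.zero_apply] at this
    exact absurd this (by decide)
  · have := congrFun h ⟨1, by omega⟩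
    rw [show dlt (by omega : 1 ≤ n) ⟨1, by omega⟩ = 0 from
      if_neg (fun hc => absurd (congrArg Fin.val hc) (by norm_num))] at this
    exact absurd this (by decide)

lemma G1_ne_top (hn : 1 ≤ n) : G1 n ≠ ⊤ := fun h => dlt_not_G1 hn (h ▸ Subgroup.mem_top _)
lemma G2_ne_top (hn : 1 ≤ n) : G2 n ≠ ⊤ := fun h => dlt_not_G2 hn (h ▸ Subgroup.mem_top _)
lemma G3_ne_top (hn2 : 2 ≤ n) : G3 n ≠ ⊤ := fun h => dlt_not_G3 hn2 (h ▸ Subgroup.mem_top _)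

lemma G1_coatom (hn : 1 ≤ n) : IsCoatom (G1 n) :=
  coatom_ker (sumHom n) (mke (dlt hn) 1) (fun h => dlt_not_G1 hn (MonoidHom.mem_ker.mpr h))

lemma G2_coatom (hn : 1 ≤ n) : IsCoatom (G2 n) :=
  coatom_ker (sumSgnHom n) (mke (dlt hn) 1) (fun h => dlt_not_G2 hn (MonoidHom.mem_ker.mpr h))

lemma zero_G3 (σ : Equiv.Perm (Fin n)) : mke 0 σ ∈ G3 n := mem_G3.mpr (Or.inl rfl)

lemma G3_coatom (hn3 : 3 ≤ n) (hodd : Odd n) : IsCoatom (G3 n) := by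
  constructor
  · exact G3_ne_top (by omega)
  · intro b hb
    have hssurj : ∀ σ, ∃ g ∈ b, g.right = σ :=
      fun σ => ⟨mke 0 σ, hb.le (zero_G3 σ), rfl⟩
    have h1mem : mke (fun _ => (1 : ZMod 2)) 1 ∈ b := hb.le (mem_G3.mpr (Or.inr rfl))
    have hsum1 : ∑ _k : Fin n, (1 : ZMod 2) = 1 := by rw [sum_const_one, odd_cast_one hodd]
    obtain ⟨y, hyb, hyG3⟩ := SetLike.exists_of_lt hb
    set x := y * (mke 0 y.right)⁻¹ with hx
    have hxb : x ∈ b := b.mul_mem hyb (b.inv_mem (hb.le (zero_G3 y.right)))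
    have hxr : x.right = 1 := by rw [hx, right_mul, rinv0, right_mke, mul_inv_cancel]
    have hxAv : Av x = Av y := by
      funext i
      rw [hx, Av_mul, Av_inv, Av_mke]
      show Av y i + (0 : Fin n → ZMod 2) _ = Av y i
      rw [Pi.zero_apply, add_zero]
    have hxnc : ¬(Av x = 0 ∨ Av x = fun _ => 1) := by
      rw [hxAv]
      exact fun h => hyG3 (mem_G3.mpr h)
    obtain ⟨i, j, hij⟩ := exists_ne_of_not_const (by omega) hxnc
    have hxm : mke (Av x) 1 ∈ b := by
      rw [show mke (Av x) 1 = x from by rw [← hxr]; exact mke_self x]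
      exact hxb
    exact eq_top_of hssurj h1mem hsum1 hxm hij

lemma G1_proj : (G1 n).map SemidirectProduct.rightHom = ⊤ := by
  rw [Subgroup.eq_top_iff']
  intro σ
  exact Subgroup.mem_map.mpr ⟨mke 0 σ, by rw [mem_G1]; simp, rfl⟩

lemma G2_proj (hn : 1 ≤ n) : (G2 n).map SemidirectProduct.rightHom = ⊤ := by
  rw [Subgroup.eq_top_iff']
  intro σ
  rcases z2cases (sg σ) with h | h
  · refine Subgroup.mem_map.mpr ⟨mke 0 σ, ?_, rfl⟩
    rw [mem_G2, right_mke, h, add_zero]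
    simp
  · refine Subgroup.mem_map.mpr ⟨mke (dlt hn) σ, ?_, rfl⟩
    rw [mem_G2, right_mke, h, Av_mke, sum_dlt]
    decide

lemma G3_proj : (G3 n).map SemidirectProduct.rightHom = ⊤ := by
  rw [Subgroup.eq_top_iff']
  intro σ
  exact Subgroup.mem_map.mpr ⟨mke 0 σ, zero_G3 σ, rfl⟩

lemma map_conj_coatom {G : Type*} [Group G] (e : G ≃* G) {K : Subgroup G}
    (h : IsCoatom K) : IsCoatom (K.map e.toMonoidHom) := by
  constructor
  · intro htop
    apply h.1
    have hinj : Function.Injective (e.toMonoidHom : G →* G) := e.injective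
    apply Subgroup.map_injective hinj
    rw [htop, Subgroup.map_top_of_surjective _ e.surjective]
  · intro b hb
    have hle : K ≤ b.comap e.toMonoidHom := Subgroup.map_le_iff_le_comap.mp hb.le
    have hne : K ≠ b.comap e.toMonoidHom := by
      intro hEq
      apply hb.ne
      rw [hEq, Subgroup.map_comap_eq_self_of_surjective e.surjective]
    have htop := h.2 _ (lt_of_le_of_ne hle hne)
    have h2 := congrArg (Subgroup.map e.toMonoidHom) htop
    rwa [Subgroup.map_comap_eq_self_of_surjective e.surjective,
      Subgroup.map_top_of_surjective _ e.surjective] at h2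

lemma map_conj_proj (u : G0 n) (Kc : Subgroup (G0 n))
    (h : Kc.map SemidirectProduct.rightHom = ⊤) :
    (Kc.map (MulAut.conj u).toMonoidHom).map SemidirectProduct.rightHom = ⊤ := by
  rw [Subgroup.map_map]
  have hcomp : (SemidirectProduct.rightHom (φ := permAction n)).comp (MulAut.conj u).toMonoidHom
      = ((MulAut.conj u.right).toMonoidHom).comp (SemidirectProduct.rightHom (φ := permAction n)) := by
    refine MonoidHom.ext fun g => ?_
    show SemidirectProduct.rightHom ((MulAut.conj u) g)
      = (MulAut.conj u.right) (SemidirectProduct.rightHom g)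
    rw [MulAut.conj_apply, MulAut.conj_apply, map_mul, map_mul, map_inv]
    rfl
  rw [hcomp, ← Subgroup.map_map, h, Subgroup.map_top_of_surjective _ (MulAut.conj u.right).surjective]

lemma map_conj_one {G : Type*} [Group G] (H : Subgroup G) :
    H.map (MulAut.conj (1 : G)).toMonoidHom = H := by
  ext g
  rw [Subgroup.mem_map]
  constructor
  · rintro ⟨x, hx, hxe⟩
    have : (MulAut.conj (1 : G)) x = x := by rw [MulAut.conj_apply]; group
    rw [← hxe]
    show (MulAut.conj (1 : G)) x ∈ H
    rwa [this]
  · intro hg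
    refine ⟨g, hg, ?_⟩
    show (MulAut.conj (1 : G)) g = g
    rw [MulAut.conj_apply]; group

lemma mke_invol (v : Fin n → ZMod 2) : mke v 1 * mke v 1 = 1 := by
  rw [mul_mke_one]
  rw [show v + v = 0 from funext fun k => z2addself (v k)]
  exact mke_zero_eq_one

lemma le_conj_G3 {K : Subgroup (G0 n)} {v : Fin n → ZMod 2}
    (hv : ∀ g ∈ K, mke v 1 * g * mke v 1 ∈ G3 n) :
    K ≤ (G3 n).map (MulAut.conj (mke v 1)).toMonoidHom := by
  intro g hg
  have huinv : (mke v 1)⁻¹ = mke v 1 := by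
    rw [inv_eq_iff_mul_eq_one]
    exact mke_invol v
  refine Subgroup.mem_map.mpr ⟨(mke v 1)⁻¹ * g * (mke v 1)⁻¹, ?_, ?_⟩
  · rw [huinv]
    exact hv g hg
  · show (MulAut.conj (mke v 1)) _ = g
    rw [MulAut.conj_apply, huinv]
    have h2 : mke v 1 * (mke v 1 * g * mke v 1) * mke v 1
        = (mke v 1 * mke v 1) * g * (mke v 1 * mke v 1) := by group
    rw [h2, mke_invol, one_mul, mul_one]

end Assembly
theorem maximal_subgroups_hyperoctahedral (n : ℕ) (hn : 1 ≤ n) :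
    (∀ K : Subgroup (G0 n),
        (IsCoatom K ∧ K.map SemidirectProduct.rightHom = ⊤) ↔
          ∃ u : G0 n,
            K = (G1 n).map (MulAut.conj u).toMonoidHom ∨
            (2 ≤ n ∧ K = (G2 n).map (MulAut.conj u).toMonoidHom) ∨
            (3 ≤ n ∧ Odd n ∧ K = (G3 n).map (MulAut.conj u).toMonoidHom)) ∧
    (∀ K : Subgroup (G0 n), K ≠ ⊤ → K.map SemidirectProduct.rightHom = ⊤ →
        ∃ u : G0 n,
          K ≤ (G1 n).map (MulAut.conj u).toMonoidHom ∨
          K ≤ (G2 n).map (MulAut.conj u).toMonoidHom ∨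
          (3 ≤ n ∧ Odd n ∧ K ≤ (G3 n).map (MulAut.conj u).toMonoidHom)) := by
  constructor
  · intro K
    constructor
    · rintro ⟨hco, hproj⟩
      rcases main_lemma hn K hco.1 hproj with hle | hle | ⟨hn3, hodd, v, hv⟩
      · refine ⟨1, Or.inl ?_⟩
        rw [map_conj_one]
        rcases eq_or_lt_of_le hle with h | h
        · exact h
        · exact absurd (hco.2 _ h) (G1_ne_top hn)
      · by_cases hn2 : 2 ≤ n
        · refine ⟨1, Or.inr (Or.inl ⟨hn2, ?_⟩)⟩
          rw [map_conj_one]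
          rcases eq_or_lt_of_le hle with h | h
          · exact h
          · exact absurd (hco.2 _ h) (G2_ne_top hn)
        · have hn1 : n = 1 := by omega
          subst hn1
          have hG21 : G2 1 = G1 1 := by
            ext g
            rw [mem_G1, mem_G2]
            have hr : g.right = 1 := Equiv.ext fun a => Subsingleton.elim _ _
            rw [hr, sg_one, add_zero]
          refine ⟨1, Or.inl ?_⟩
          rw [map_conj_one]
          rw [hG21] at hle
          rcases eq_or_lt_of_le hle with h | h
          · exact h
          · exact absurd (hco.2 _ h) (G1_ne_top hn)
      · refine ⟨mke v 1, Or.inr (Or.inr ⟨hn3, hodd, ?_⟩)⟩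
        have hle := le_conj_G3 hv
        rcases eq_or_lt_of_le hle with h | h
        · exact h
        · exact absurd (hco.2 _ h)
            (map_conj_coatom (MulAut.conj (mke v 1)) (G3_coatom hn3 hodd)).1
    · rintro ⟨u, hcase | ⟨hn2, hcase⟩ | ⟨hn3, hodd, hcase⟩⟩
      · subst hcase
        exact ⟨map_conj_coatom _ (G1_coatom hn), map_conj_proj u _ G1_proj⟩
      · subst hcase
        exact ⟨map_conj_coatom _ (G2_coatom hn), map_conj_proj u _ (G2_proj hn)⟩
      · subst hcase
        exact ⟨map_conj_coatom _ (G3_coatom hn3 hodd), map_conj_proj u _ G3_proj⟩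
  · intro K hK hproj
    rcases main_lemma hn K hK hproj with hle | hle | ⟨hn3, hodd, v, hv⟩
    · exact ⟨1, Or.inl (by rw [map_conj_one]; exact hle)⟩
    · exact ⟨1, Or.inr (Or.inl (by rw [map_conj_one]; exact hle))⟩
    · exact ⟨mke v 1, Or.inr (Or.inr ⟨hn3, hodd, le_conj_G3 hv⟩)⟩
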